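/- Given a deviating player who withholds its share whenever it is supposed to send, its expected per-round utility when supposed to send equals (α²·u_top + (1-α)²·u_bot)/(α²+(1-α)²); honest play yields u_mid in those states; hence for all α below the threshold α* = the solution where these are equal (which exists in (0,1) since u_top > u_mid > u_bot), honest play is a strict best response in the sending subgame. -/

import Mathlib

/-- A deviator who withholds whenever supposed to send gets conditional
expected utility (α²·u_top + (1-α)²·u_bot)/(α²+(1-α)²) per round, while
honest play yields u_mid. Since u_top > u_mid > u_bot there is a threshold
α* ∈ (0,1) where the two are equal, and for all α below α* honest play is a
strict best response in the sending subgame. -/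
theorem stmt17 (u_top u_mid u_bot : ℝ) (h1 : u_mid < u_top) (h2 : u_bot < u_mid) :
    ∃ αs ∈ Set.Ioo (0 : ℝ) 1,
      (αs ^ 2 * u_top + (1 - αs) ^ 2 * u_bot) / (αs ^ 2 + (1 - αs) ^ 2)
        = u_mid ∧
      ∀ α ∈ Set.Ioo (0 : ℝ) αs,
        (α ^ 2 * u_top + (1 - α) ^ 2 * u_bot) / (α ^ 2 + (1 - α) ^ 2)
          < u_mid := by
  set a := Real.sqrt (u_mid - u_bot) with ha
  set b := Real.sqrt (u_top - u_mid) with hb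
  have ha0 : 0 < a := Real.sqrt_pos.mpr (by linarith)
  have hb0 : 0 < b := Real.sqrt_pos.mpr (by linarith)
  have ha2 : a ^ 2 = u_mid - u_bot := Real.sq_sqrt (by linarith)
  have hb2 : b ^ 2 = u_top - u_mid := Real.sq_sqrt (by linarith)
  have hab : 0 < a + b := by linarith
  refine ⟨a / (a + b), ⟨div_pos ha0 hab, (div_lt_one hab).mpr (by linarith)⟩, ?_, ?_⟩
  · have hden : (a / (a + b)) ^ 2 + (1 - a / (a + b)) ^ 2 > 0 := by
      nlinarith [sq_nonneg (2 * (a / (a + b)) - 1)]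
    rw [div_eq_iff (ne_of_gt hden)]
    have h1m : 1 - a / (a + b) = b / (a + b) := by field_simp; ring
    rw [h1m]
    field_simp
    nlinarith [sq_nonneg a, sq_nonneg b]
  · intro α hα
    obtain ⟨hα0, hα1⟩ := hα
    have hden : α ^ 2 + (1 - α) ^ 2 > 0 := by
      nlinarith [sq_nonneg (2 * α - 1)]
    rw [div_lt_iff₀ hden]
    -- α < a/(a+b) ⇒ α*(a+b) < a ⇒ α*b < (1-α)*a, both nonneg
    have hkey : α * b < (1 - α) * a := by
      have := (lt_div_iff₀ hab).mp hα1
      nlinarith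
    have hαb : 0 ≤ α * b := by positivity
    have hsq : (α * b) ^ 2 < ((1 - α) * a) ^ 2 := by
      nlinarith
    nlinarith [hsq, ha2, hb2]
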